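/- Let Q be a smooth manifold, T*Q its cotangent bundle with canonical symplectic two-form Ω_Q = −dΘ_Q and bundle projection π_Q, and let h be a smooth function on T*Q with Hamiltonian vector field X_h defined by ι_{X_h}Ω_Q = dh. For a smooth function W on Q, regard its differential dW as a section of π_Q and define the vector field X_h^{dW} := Tπ_Q ∘ X_h ∘ dW on Q. Then the following are equivalent: (1) X_h and X_h^{dW} are dW-related, i.e. T(dW) ∘ X_h^{dW} = X_h ∘ dW; (2) d(h ∘ dW) = 0. -/

import Mathlib

noncomputable section

open scoped BigOperators

variable {E F : Type*} [NormedAddCommGroup E] [NormedSpace ℝ E]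
  [NormedAddCommGroup F] [NormedSpace ℝ F]

/-- The exterior derivative of a smooth function, as a one-form. -/
def extDer0 (f : E → ℝ) : E → E → ℝ := fun x v => fderiv ℝ f x v

/-- The exterior derivative of a one-form. -/
def extDer1 (α : E → E → ℝ) : E → E → E → ℝ := fun x u v =>
  fderiv ℝ (fun y => α y v) x u - fderiv ℝ (fun y => α y u) x v

/-- The exterior derivative of a two-form. -/
def extDer2 (ω : E → E → E → ℝ) : E → E → E → E → ℝ := fun x u v w =>
  fderiv ℝ (fun y => ω y v w) x u - fderiv ℝ (fun y => ω y u w) x v +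
    fderiv ℝ (fun y => ω y u v) x w

/-- Wedge product of two one-forms. -/
def wedge11 (α β : E → E → ℝ) : E → E → E → ℝ := fun x u v =>
  α x u * β x v - α x v * β x u

/-- Wedge product of a one-form with a two-form. -/
def wedge12 (θ : E → E → ℝ) (ω : E → E → E → ℝ) : E → E → E → E → ℝ := fun x u v w =>
  θ x u * ω x v w - θ x v * ω x u w + θ x w * ω x u v

/-- Pullback of a one-form along a smooth map. -/
def pb1 (φ : E → F) (α : F → F → ℝ) : E → E → ℝ := fun x v => α (φ x) (fderiv ℝ φ x v)

/-- Pullback of a two-form along a smooth map. -/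
def pb2 (φ : E → F) (ω : F → F → F → ℝ) : E → E → E → ℝ := fun x u v =>
  ω (φ x) (fderiv ℝ φ x u) (fderiv ℝ φ x v)

/-- Model for the cotangent bundle `T*Q` of the manifold `Q = E`. -/
abbrev Cot (E : Type*) [NormedAddCommGroup E] [NormedSpace ℝ E] := E × (E →L[ℝ] ℝ)

/-- The tautological (canonical) one-form `Θ_Q` on `T*Q`. -/
def taut : Cot E → Cot E → ℝ := fun z v => z.2 v.1

/-- The canonical symplectic two-form `Ω_Q = -dΘ_Q` on `T*Q`. -/
def canSymp : Cot E → Cot E → Cot E → ℝ := fun z u v => -(extDer1 taut z u v)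

/-- (Geometric Hamilton–Jacobi theorem on the cotangent bundle.)
`Q` is modeled on a finite-dimensional real vector space `E`, `T*Q = E × (E →L[ℝ] ℝ)`
carries the canonical symplectic form `Ω_Q = -dΘ_Q`.  `X_h` is the Hamiltonian vector
field of `h` (`ι_{X_h}Ω_Q = dh`), `γ = dW` is the section given by the differential of
`W`, and `X_h^{dW} = Tπ_Q ∘ X_h ∘ dW`.  Then `X_h` and `X_h^{dW}` are `dW`-related iff
`d(h ∘ dW) = 0`. -/
lemma taut_fderiv_aux (v z u : Cot E) :
    fderiv ℝ (fun y : Cot E => y.2 v.1) z u = u.2 v.1 := by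
  have hL : HasFDerivAt (fun y : Cot E => y.2 v.1)
      ((ContinuousLinearMap.apply ℝ ℝ v.1).comp (ContinuousLinearMap.snd ℝ E (E →L[ℝ] ℝ))) z :=
    ((ContinuousLinearMap.apply ℝ ℝ v.1).comp
      (ContinuousLinearMap.snd ℝ E (E →L[ℝ] ℝ))).hasFDerivAt
  rw [hL.fderiv]; rfl

lemma canSymp_eq (z u v : Cot E) : canSymp z u v = v.2 u.1 - u.2 v.1 := by
  simp [canSymp, extDer1, taut, taut_fderiv_aux]

theorem hamilton_jacobi_cotangent
    [FiniteDimensional ℝ E]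
    (h : Cot E → ℝ) (hh : ContDiff ℝ (⊤ : ℕ∞) h)
    (X : Cot E → Cot E)
    (hX : ∀ z v, canSymp z (X z) v = fderiv ℝ h z v)
    (W : E → ℝ) (hW : ContDiff ℝ (⊤ : ℕ∞) W)
    (γ : E → Cot E) (hγ : ∀ q, γ q = (q, fderiv ℝ W q))
    (Xγ : E → E) (hXγ : ∀ q, Xγ q = (X (γ q)).1) :
    (∀ q, fderiv ℝ γ q (Xγ q) = X (γ q)) ↔
      (∀ q, fderiv ℝ (fun q' => h (γ q')) q = 0) := by
  obtain rfl : γ = fun q => (q, fderiv ℝ W q) := funext hγ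
  have hone : (1 : WithTop ℕ∞) ≤ ((⊤ : ℕ∞) : WithTop ℕ∞) := by exact_mod_cast le_top
  have htop : ((⊤ : ℕ∞) : WithTop ℕ∞) + 1 ≤ ((⊤ : ℕ∞) : WithTop ℕ∞) := by
    exact_mod_cast le_top
  set g : E → (E →L[ℝ] ℝ) := fun q => fderiv ℝ W q with hg_def
  have hg : ContDiff ℝ (⊤ : ℕ∞) g := hW.fderiv_right htop
  -- derivative of γ
  have hDγ : ∀ q, HasFDerivAt (fun q : E => (q, g q))
      ((ContinuousLinearMap.id ℝ E).prod (fderiv ℝ g q)) q := fun q =>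
    HasFDerivAt.prodMk (hasFDerivAt_id q) ((hg.differentiable (by simp) q).hasFDerivAt)
  have hfderivγ : ∀ q u, fderiv ℝ (fun q : E => (q, g q)) q u = (u, fderiv ℝ g q u) := by
    intro q u; rw [(hDγ q).fderiv]; rfl
  -- symmetry of second derivative
  have hsymm : ∀ q u v, fderiv ℝ g q u v = fderiv ℝ g q v u := by
    intro q u v
    exact second_derivative_symmetric
      (f' := g) (fun y => ((hW.differentiable (by simp) y).hasFDerivAt))
      ((hg.differentiable (by simp) q).hasFDerivAt) u v
  -- components of X
  have hX1 : ∀ z (β : E →L[ℝ] ℝ), β (X z).1 = fderiv ℝ h z (0, β) := by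
    intro z β
    have := hX z (0, β)
    rw [canSymp_eq] at this
    simpa using this
  have hX2 : ∀ z (a : E), -((X z).2 a) = fderiv ℝ h z (a, 0) := by
    intro z a
    have := hX z (a, 0)
    rw [canSymp_eq] at this
    simpa using this
  -- derivative of h ∘ γ
  have hcomp : ∀ q u, fderiv ℝ (fun q' => h (q', g q')) q u
      = fderiv ℝ g q (Xγ q) u - (X (q, g q)).2 u := by
    intro q u
    have hc : HasFDerivAt (fun q' => h (q', g q'))
        ((fderiv ℝ h (q, g q)).comp ((ContinuousLinearMap.id ℝ E).prod (fderiv ℝ g q))) q :=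
      ((hh.differentiable (by simp) (q, g q)).hasFDerivAt).comp q (hDγ q)
    rw [hc.fderiv]
    have h1 : Xγ q = (X (q, g q)).1 := hXγ q
    have hsplit : ((u, fderiv ℝ g q u) : Cot E) = (u, 0) + (0, fderiv ℝ g q u) := by simp
    calc fderiv ℝ h (q, g q) (u, fderiv ℝ g q u)
        = fderiv ℝ h (q, g q) (u, 0) + fderiv ℝ h (q, g q) (0, fderiv ℝ g q u) := by
          rw [hsplit, map_add]
      _ = -((X (q, g q)).2 u) + fderiv ℝ g q u (X (q, g q)).1 := by
          rw [hX2, hX1]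
      _ = fderiv ℝ g q (Xγ q) u - (X (q, g q)).2 u := by
          rw [hsymm q u (X (q, g q)).1, h1]; ring
  constructor
  · intro H q
    have hq : fderiv ℝ (fun q : E => (q, g q)) q (Xγ q) = X (q, g q) := H q
    rw [hfderivγ] at hq
    have h2 : fderiv ℝ g q (Xγ q) = (X (q, g q)).2 := congrArg Prod.snd hq
    have goal' : fderiv ℝ (fun q' => h (q', g q')) q = 0 := by
      ext u
      rw [hcomp q u, h2]
      simp
    exact goal'
  · intro H q
    have goal' : fderiv ℝ (fun q : E => (q, g q)) q (Xγ q) = X (q, g q) := by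
      rw [hfderivγ]
      have h1 : Xγ q = (X (q, g q)).1 := hXγ q
      have h2 : fderiv ℝ g q (Xγ q) = (X (q, g q)).2 := by
        ext u
        have H' : fderiv ℝ (fun q' => h (q', g q')) q = 0 := H q
        have hz : fderiv ℝ (fun q' => h (q', g q')) q u = 0 := by rw [H']; rfl
        rw [hcomp q u] at hz
        linarith
      exact Prod.ext h1 h2
    exact goal'
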